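/- arXiv:2509.07536 — 2 statements merged into one kernel-verified Lean document; each statement's English description precedes it below -/
import Mathlib

section
/- Let ω be a radial weight in the class D̂ and let α>0. Define μ(r)=ω(r)·ω̂(r)^{α−1} for r∈[0,1). Then μ is a radial weight belonging to D̂, and there exists a constant C≥1 (depending only on ω and α) such that C^{−1}·(ω_x)^α ≤ μ_x ≤ C·(ω_x)^α for all x≥1. -/
open MeasureTheory Filter Set
open scoped ENNReal

set_option maxHeartbeats 1000000

noncomputable section

/-- `ω̂(r) = ∫_r^1 ω(s) ds`. -/
def omegaHat (ω : ℝ → ℝ) (r : ℝ) : ℝ := ∫ s in r..1, ω s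

/-- A radial weight: nonnegative and Lebesgue integrable on `[0,1)`. -/
def IsRadialWeight (ω : ℝ → ℝ) : Prop :=
  (∀ r ∈ Set.Ico (0:ℝ) 1, 0 ≤ ω r) ∧ MeasureTheory.IntegrableOn ω (Set.Ico 0 1)

/-- The class `D̂` of upper doubling radial weights. -/
def InDhat (ω : ℝ → ℝ) : Prop :=
  ∃ C > (0:ℝ), ∀ r ∈ Set.Ico (0:ℝ) 1, omegaHat ω r ≤ C * omegaHat ω ((1 + r) / 2)

/-- The class `Ď`. -/
def InDcheck (ω : ℝ → ℝ) : Prop :=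
  ∃ K > (1:ℝ), ∃ C > (1:ℝ), ∀ r ∈ Set.Ico (0:ℝ) 1,
    C * omegaHat ω (1 - (1 - r) / K) ≤ omegaHat ω r

/-- Moments `μ_x = ∫_0^1 r^x μ(r) dr`. -/
def momentW (μ : ℝ → ℝ) (x : ℝ) : ℝ := ∫ r in (0:ℝ)..1, r ^ x * μ r

/-- The coefficients `μ_{2k+1}` of the `A²_μ` pairing. -/
def momentCoeff (μ : ℝ → ℝ) : ℕ → ℝ := fun k => momentW μ (2 * (k:ℝ) + 1)

/-- The point `r e^{iθ}` of the circle of radius `r`. -/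
def circlePt (r θ : ℝ) : ℂ := (r:ℂ) * Complex.exp ((θ:ℂ) * Complex.I)

/-- Integral means `M_p(r,f)` (with values in `[0,∞]`). -/
def MpE (p r : ℝ) (f : ℂ → ℂ) : ℝ≥0∞ :=
  (ENNReal.ofReal (1 / (2 * Real.pi)) *
    ∫⁻ θ in Set.Ioo (0:ℝ) (2 * Real.pi), ENNReal.ofReal (‖f (circlePt r θ)‖ ^ p)) ^ (1 / p)

/-- Integral means of a `[0,∞]`-valued function. -/
def MpEE (p r : ℝ) (F : ℂ → ℝ≥0∞) : ℝ≥0∞ :=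
  (ENNReal.ofReal (1 / (2 * Real.pi)) *
    ∫⁻ θ in Set.Ioo (0:ℝ) (2 * Real.pi), (F (circlePt r θ)) ^ p) ^ (1 / p)

/-- The norm of the mixed norm space `L^{p,q}_ω`. -/
def LpqNormE (ω : ℝ → ℝ) (p q : ℝ) (f : ℂ → ℂ) : ℝ≥0∞ :=
  (∫⁻ r in Set.Ioo (0:ℝ) 1, (MpE p r f) ^ q * ENNReal.ofReal (r * ω r)) ^ (1 / q)

/-- The `L^{p,q}_ω` norm of a `[0,∞]`-valued function. -/
def LpqNormEE (ω : ℝ → ℝ) (p q : ℝ) (F : ℂ → ℝ≥0∞) : ℝ≥0∞ :=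
  (∫⁻ r in Set.Ioo (0:ℝ) 1, (MpEE p r F) ^ q * ENNReal.ofReal (r * ω r)) ^ (1 / q)

/-- The norm of `A^{p,∞}_ω` : `sup_{0 ≤ r < 1} M_p(r,f) ω̂(r)`. -/
def ApInfNormE (ω : ℝ → ℝ) (p : ℝ) (f : ℂ → ℂ) : ℝ≥0∞ :=
  ⨆ r ∈ Set.Ico (0:ℝ) 1, MpE p r f * ENNReal.ofReal (omegaHat ω r)

/-- Membership in the mixed norm space `A^{p,q}_ω`. -/
def InApq (ω : ℝ → ℝ) (p q : ℝ) (f : ℂ → ℂ) : Prop :=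
  DifferentiableOn ℂ f (Metric.ball 0 1) ∧ LpqNormE ω p q f < ⊤

/-- Membership in `A^{p,∞}_ω`. -/
def InApInf (ω : ℝ → ℝ) (p : ℝ) (f : ℂ → ℂ) : Prop :=
  DifferentiableOn ℂ f (Metric.ball 0 1) ∧ ApInfNormE ω p f < ⊤

/-- Taylor coefficient of `f` at `0`. -/
def taylorCoeff (f : ℂ → ℂ) (n : ℕ) : ℂ := iteratedDeriv n f 0 / (n.factorial : ℂ)

/-- The pairing `⟨f,g⟩ = lim_{r→1⁻} ∑_k f̂(k) conj(ĝ(k)) c(k) r^k` exists and equals `l`. -/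
def HasPairingC (c : ℕ → ℝ) (f g : ℂ → ℂ) (l : ℂ) : Prop :=
  (∀ r ∈ Set.Ico (0:ℝ) 1, Summable (fun k : ℕ =>
    taylorCoeff f k * (starRingEnd ℂ) (taylorCoeff g k) * ((c k : ℝ) : ℂ) * ((r:ℂ)) ^ k)) ∧
  Filter.Tendsto (fun r : ℝ => ∑' k : ℕ,
    taylorCoeff f k * (starRingEnd ℂ) (taylorCoeff g k) * ((c k : ℝ) : ℂ) * ((r:ℂ)) ^ k)
    (nhdsWithin 1 (Set.Iio 1)) (nhds l)

/-- `L` is linear on the functions satisfying `P`. -/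
def IsLinearOn (P : (ℂ → ℂ) → Prop) (L : (ℂ → ℂ) → ℂ) : Prop :=
  (∀ f g : ℂ → ℂ, P f → P g → L (f + g) = L f + L g) ∧
  (∀ (c : ℂ) (f : ℂ → ℂ), P f → L (c • f) = c * L f)

/-- Dilation `f_r(z) = f(rz)`. -/
def dilateF (f : ℂ → ℂ) (r : ℝ) : ℂ → ℂ := fun z => f ((r:ℂ) * z)

/-- The BMOA norm `|f(0)| + sup_{a∈D} sup_{0<r<1} M₂(r, f∘φ_a - f(a))`. -/
def BMOANormE (f : ℂ → ℂ) : ℝ≥0∞ :=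
  ENNReal.ofReal ‖f 0‖ +
    ⨆ a ∈ Metric.ball (0:ℂ) 1, ⨆ r ∈ Set.Ioo (0:ℝ) 1,
      MpE 2 r (fun z => f ((a - z) / (1 - (starRingEnd ℂ) a * z)) - f a)

/-- The Bloch norm `|f(0)| + sup_{z∈D} (1-|z|²)|f'(z)|`. -/
def BlochNormE (f : ℂ → ℂ) : ℝ≥0∞ :=
  ENNReal.ofReal ‖f 0‖ +
    ⨆ z ∈ Metric.ball (0:ℂ) 1, ENNReal.ofReal ((1 - ‖z‖ ^ 2) * ‖deriv f z‖)

/-- The norm of `X(q,ω)`: `(∫_0^1 ‖f_r‖_X^q ω(r) dr)^{1/q}`. -/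
def XqNormE (Xnorm : (ℂ → ℂ) → ℝ≥0∞) (ω : ℝ → ℝ) (q : ℝ) (f : ℂ → ℂ) : ℝ≥0∞ :=
  (∫⁻ r in Set.Ioo (0:ℝ) 1, (Xnorm (dilateF f r)) ^ q * ENNReal.ofReal (ω r)) ^ (1 / q)

/-- The norm of `X(∞,ω)`: `sup_{0<r<1} ‖f_r‖_X ω̂(r)`. -/
def XInfNormE (Xnorm : (ℂ → ℂ) → ℝ≥0∞) (ω : ℝ → ℝ) (f : ℂ → ℂ) : ℝ≥0∞ :=
  ⨆ r ∈ Set.Ioo (0:ℝ) 1, Xnorm (dilateF f r) * ENNReal.ofReal (omegaHat ω r)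

/-- The standard radial weight `ν_β(r) = (β+1)(1-r²)^β`. -/
def nuWeight (β : ℝ) : ℝ → ℝ := fun r => (β + 1) * (1 - r ^ 2) ^ β

/-- The Bergman reproducing kernel `B^ω_a(z) = ∑ (z conj a)^n / (2 ω_{2n+1})`. -/
def bergmanKernel (ω : ℝ → ℝ) (a z : ℂ) : ℂ :=
  ∑' n : ℕ, (z * (starRingEnd ℂ) a) ^ n / (2 * ((momentW ω (2 * (n:ℝ) + 1) : ℝ) : ℂ))

/-- The Bergman projection (`dA` is normalized area measure). -/
def PomegaProj (ω : ℝ → ℝ) (f : ℂ → ℂ) (z : ℂ) : ℂ :=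
  (Real.pi)⁻¹ • ∫ ζ in Metric.ball (0:ℂ) 1,
    f ζ * (starRingEnd ℂ) (bergmanKernel ω z ζ) * ((ω ‖ζ‖ : ℝ) : ℂ)

/-- The maximal Bergman projection applied to `|f|`, with values in `[0,∞]`. -/
def PomegaPlusL (ω : ℝ → ℝ) (f : ℂ → ℂ) (z : ℂ) : ℝ≥0∞ :=
  ∫⁻ ζ in Metric.ball (0:ℂ) 1,
    ENNReal.ofReal (‖f ζ‖ * ‖bergmanKernel ω z ζ‖ * ω ‖ζ‖ / Real.pi)

/-- The Hardy `H¹` norm. -/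
def H1NormE (f : ℂ → ℂ) : ℝ≥0∞ := ⨆ r ∈ Set.Ioo (0:ℝ) 1, MpE 1 r f

/-- `r_n = inf{ r ∈ [0,1) : ω̂(r) = ω̂(0) K^{-n} }`. -/
def rSeq (ω : ℝ → ℝ) (K : ℝ) (n : ℕ) : ℝ :=
  sInf {r | r ∈ Set.Ico (0:ℝ) 1 ∧ omegaHat ω r = omegaHat ω 0 * K ^ (-(n:ℝ))}

/-- `M_n = ⌊1/(1-r_n)⌋`. -/
def MSeq (ω : ℝ → ℝ) (K : ℝ) (n : ℕ) : ℕ := ⌊1 / (1 - rSeq ω K n)⌋₊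

/-- Weighted Hadamard product of a polynomial with an analytic function:
`z ↦ ∑_j c(j) P̂(j) ĝ(j) z^j`. -/
def hadamardPolyC (c : ℕ → ℂ) (P : Polynomial ℂ) (g : ℂ → ℂ) : ℂ → ℂ :=
  fun z => ∑ j ∈ Finset.range (P.natDegree + 1), c j * P.coeff j * taylorCoeff g j * z ^ j

/-- An admissible Banach space of analytic functions on the unit disc, given by a
carrier set and a norm function. -/
structure AdmissibleSpace where
  carrier : Set (ℂ → ℂ)
  nrm : (ℂ → ℂ) → ℝ
  mem_analytic : ∀ f ∈ carrier, DifferentiableOn ℂ f (Metric.ball 0 1)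
  zero_mem : (0 : ℂ → ℂ) ∈ carrier
  add_mem : ∀ f g : ℂ → ℂ, f ∈ carrier → g ∈ carrier → f + g ∈ carrier
  smul_mem : ∀ (c : ℂ) (f : ℂ → ℂ), f ∈ carrier → c • f ∈ carrier
  nrm_nonneg : ∀ f ∈ carrier, 0 ≤ nrm f
  nrm_eq_zero : ∀ f ∈ carrier, nrm f = 0 → ∀ z ∈ Metric.ball (0:ℂ) 1, f z = 0
  nrm_add : ∀ f g : ℂ → ℂ, f ∈ carrier → g ∈ carrier → nrm (f + g) ≤ nrm f + nrm g
  nrm_smul : ∀ (c : ℂ) (f : ℂ → ℂ), f ∈ carrier → nrm (c • f) = ‖c‖ * nrm f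
  complete : ∀ u : ℕ → (ℂ → ℂ), (∀ n, u n ∈ carrier) →
    (∀ ε : ℝ, 0 < ε → ∃ N : ℕ, ∀ m ≥ N, ∀ n ≥ N, nrm (u m - u n) < ε) →
    ∃ f ∈ carrier, Filter.Tendsto (fun n => nrm (u n - f)) Filter.atTop (nhds 0)
  norm_conv_implies_ucc : ∀ (u : ℕ → (ℂ → ℂ)) (f : ℂ → ℂ),
    (∀ n, u n ∈ carrier) → f ∈ carrier →
    Filter.Tendsto (fun n => nrm (u n - f)) Filter.atTop (nhds 0) →
    ∀ Kc : Set ℂ, Kc ⊆ Metric.ball 0 1 → IsCompact Kc →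
      TendstoUniformlyOn (fun n => u n) f Filter.atTop Kc
  ucc_implies_norm_conv : ∀ R : ℝ, 1 < R → ∀ (u : ℕ → (ℂ → ℂ)) (f : ℂ → ℂ),
    (∀ n, u n ∈ carrier ∧ DifferentiableOn ℂ (u n) (Metric.ball 0 R)) →
    DifferentiableOn ℂ f (Metric.ball 0 R) →
    (∀ Kc : Set ℂ, Kc ⊆ Metric.ball (0:ℂ) R → IsCompact Kc →
      TendstoUniformlyOn (fun n => u n) f Filter.atTop Kc) →
    f ∈ carrier ∧ Filter.Tendsto (fun n => nrm (u n - f)) Filter.atTop (nhds 0)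
  dilation_bound : ∃ C > (0:ℝ), ∀ f ∈ carrier, ∀ ζ : ℂ, ‖ζ‖ ≤ 1 →
    (fun z => f (ζ * z)) ∈ carrier ∧ nrm (fun z => f (ζ * z)) ≤ C * nrm f

/-- The operator `T_p = I^{ν_{1/p-2}}`. -/
def TpOp (p : ℝ) (g : ℂ → ℂ) : ℂ → ℂ :=
  fun z => ∑' k : ℕ,
    taylorCoeff g k * ((momentW (nuWeight (1 / p - 2)) (2 * (k:ℝ) + 1) : ℝ) : ℂ) * z ^ k

/-- Membership in the Bloch space. -/
def InBloch (g : ℂ → ℂ) : Prop :=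
  DifferentiableOn ℂ g (Metric.ball 0 1) ∧ BlochNormE g < ⊤

open Classical in
/-- The norm of the space `X_p = T_p(B)`, normed so that `T_p` is an isometry. -/
def XpNormE (p : ℝ) (h : ℂ → ℂ) : ℝ≥0∞ :=
  if H : ∃ g : ℂ → ℂ, InBloch g ∧ Set.EqOn h (TpOp p g) (Metric.ball 0 1)
  then BlochNormE H.choose else ⊤

/-- The polynomial `V_n ∗ g` where `V_n(z) = ∑_{j=2^{n-1}}^{2^{n+1}-1} ψ(j/2^{n-1}) z^j`
and `ψ(t) = Ψ(t/2) - Ψ(t)`. -/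
def VnStar (Ψ : ℝ → ℝ) (n : ℕ) (g : ℂ → ℂ) : ℂ → ℂ :=
  fun z => ∑ j ∈ Finset.Icc (2 ^ (n - 1) : ℕ) (2 ^ (n + 1) - 1 : ℕ),
    (((Ψ ((j:ℝ) / 2 ^ n) - Ψ ((j:ℝ) / 2 ^ (n - 1))) : ℝ) : ℂ) * taylorCoeff g j * z ^ j

/-- `D^ω(V_n ∗ g)`, where `D^ω h(z) = ∑ ĥ(k) z^k/(2ω_{2k+1})`. -/
def DVnStar (Ψ : ℝ → ℝ) (ω : ℝ → ℝ) (n : ℕ) (g : ℂ → ℂ) : ℂ → ℂ :=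
  fun z => ∑ j ∈ Finset.Icc (2 ^ (n - 1) : ℕ) (2 ^ (n + 1) - 1 : ℕ),
    (((Ψ ((j:ℝ) / 2 ^ n) - Ψ ((j:ℝ) / 2 ^ (n - 1))) : ℝ) : ℂ) * taylorCoeff g j * z ^ j /
      (2 * ((momentW ω (2 * (j:ℝ) + 1) : ℝ) : ℂ))

/-- `J_ω(t) = ∫_0^t ds/(ω̂(s)(1-s))`. -/
def Jomega (ω : ℝ → ℝ) (t : ℝ) : ℝ := ∫ s in (0:ℝ)..t, 1 / (omegaHat ω s * (1 - s))

section Weight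

variable {ν : ℝ → ℝ} (hnn : ∀ r ∈ Set.Ico (0:ℝ) 1, 0 ≤ ν r)
  (hint : IntegrableOn ν (Set.Ico 0 1))

include hint in
lemma wt_integrableOn_Icc : IntegrableOn ν (Set.Icc 0 1) :=
  (integrableOn_Icc_iff_integrableOn_Ico).2 hint

include hint in
lemma wt_intervalIntegrable {a b : ℝ} (ha : 0 ≤ a) (hb : b ≤ 1) (ha1 : a ≤ 1) (hb0 : 0 ≤ b) :
    IntervalIntegrable ν volume a b := by
  apply (wt_integrableOn_Icc hint).mono_set (Set.uIcc_subset_Icc ⟨ha, ha1⟩ ⟨hb0, hb⟩)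
    |>.intervalIntegrable

include hnn in
lemma wt_ae_nonneg {S : Set ℝ} (hS : MeasurableSet S) (hS1 : S ⊆ Set.Icc 0 1) :
    ∀ᵐ s ∂(volume.restrict S), 0 ≤ ν s := by
  rw [MeasureTheory.ae_iff]
  rw [Measure.restrict_apply' hS]
  have hsub : {a | ¬0 ≤ ν a} ∩ S ⊆ {(1:ℝ)} := by
    rintro s ⟨hneg, hsS⟩
    simp only [Set.mem_setOf_eq, not_le] at hneg
    have h1 := hS1 hsS
    simp only [Set.mem_singleton_iff]
    by_contra h
    exact absurd (hnn s ⟨h1.1, lt_of_le_of_ne h1.2 h⟩) (not_le.2 hneg)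
  exact measure_mono_null hsub Real.volume_singleton

include hint in
lemma wt_hat_split {a b : ℝ} (ha : 0 ≤ a) (hab : a ≤ b) (hb : b ≤ 1) :
    omegaHat ν a = (∫ s in a..b, ν s) + omegaHat ν b := by
  unfold omegaHat
  rw [intervalIntegral.integral_add_adjacent_intervals
    (wt_intervalIntegrable hint ha hb (hab.trans hb) (ha.trans hab))
    (wt_intervalIntegrable hint (ha.trans hab) le_rfl hb zero_le_one)]

include hnn in
lemma wt_integral_nonneg {a b : ℝ} (ha : 0 ≤ a) (hab : a ≤ b) (hb : b ≤ 1) :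
    0 ≤ ∫ s in a..b, ν s := by
  apply intervalIntegral.integral_nonneg_of_ae_restrict hab
  have := wt_ae_nonneg hnn (measurableSet_Icc (a := a) (b := b))
    (Set.Icc_subset_Icc ha hb)
  filter_upwards [this] with s hs using hs

include hnn in
lemma wt_hat_nonneg {a : ℝ} (ha : 0 ≤ a) (ha1 : a ≤ 1) : 0 ≤ omegaHat ν a :=
  wt_integral_nonneg hnn ha ha1 le_rfl

include hnn hint in
lemma wt_hat_antitone {a b : ℝ} (ha : 0 ≤ a) (hab : a ≤ b) (hb : b ≤ 1) :
    omegaHat ν b ≤ omegaHat ν a := by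
  rw [wt_hat_split hint ha hab hb]
  linarith [wt_integral_nonneg hnn ha hab hb]

include hint in
lemma wt_hat_continuousOn : ContinuousOn (omegaHat ν) (Set.Icc 0 1) := by
  have h := intervalIntegral.continuousOn_primitive_interval_left
    (f := ν) (a := (0:ℝ)) (b := 1) (μ := volume) ?_
  · have h' : ContinuousOn (fun x => ∫ t in x..1, ν t) (Set.Icc 0 1) := by
      simpa [Set.uIcc_of_le (by norm_num : (0:ℝ) ≤ 1)] using h
    exact h'
  · rw [Set.uIcc_of_le (by norm_num : (0:ℝ) ≤ 1)]
    exact wt_integrableOn_Icc hint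

lemma wt_hat_one : omegaHat ν 1 = 0 := intervalIntegral.integral_same

include hint in
lemma wt_ivt {r y : ℝ} (hr : r ∈ Set.Ico (0:ℝ) 1) (hy : 0 < y) (hyr : y ≤ omegaHat ν r) :
    ∃ s ∈ Set.Ico r 1, omegaHat ν s = y := by
  have hcont : ContinuousOn (omegaHat ν) (Set.Icc r 1) :=
    (wt_hat_continuousOn hint).mono (Set.Icc_subset_Icc hr.1 le_rfl)
  have := intermediate_value_Icc' hr.2.le hcont (a := r) (b := 1)
  have hy' : y ∈ Set.Icc (omegaHat ν 1) (omegaHat ν r) := by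
    rw [wt_hat_one]; exact ⟨hy.le, hyr⟩
  obtain ⟨s, hs, hsy⟩ := this hy'
  refine ⟨s, ⟨hs.1, lt_of_le_of_ne hs.2 ?_⟩, hsy⟩
  intro h; rw [h, wt_hat_one] at hsy; exact absurd hsy.symm hy.ne'

include hnn hint in
lemma wt_lint_const_mul {a b K : ℝ} (ha : 0 ≤ a) (hab : a ≤ b) (hb : b ≤ 1) (hK : 0 ≤ K) :
    ∫⁻ t in Set.Ico a b, ENNReal.ofReal (K * ν t) =
      ENNReal.ofReal (K * (omegaHat ν a - omegaHat ν b)) := by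
  have hInt : IntegrableOn (fun t => K * ν t) (Set.Ico a b) := by
    exact (hint.mono_set (Set.Ico_subset_Ico ha hb)).const_mul K
  have hae : 0 ≤ᵐ[volume.restrict (Set.Ico a b)] fun t => K * ν t := by
    filter_upwards [wt_ae_nonneg hnn measurableSet_Ico
      ((Set.Ico_subset_Ico ha hb).trans Set.Ico_subset_Icc_self)] with t ht
    exact mul_nonneg hK ht
  rw [← ofReal_integral_eq_lintegral_ofReal hInt hae]
  congr 1
  rw [MeasureTheory.integral_const_mul]
  have h1 : ∫ t in Set.Ico a b, ν t = ∫ t in a..b, ν t := by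
    rw [intervalIntegral.integral_of_le hab, integral_Ico_eq_integral_Ioo,
      integral_Ioc_eq_integral_Ioo]
  have h2 := wt_hat_split hint ha hab hb
  rw [h1]
  ring_nf
  nlinarith [h2]

include hnn hint in
lemma wt_hat_seq {r : ℝ} (hr : r ∈ Set.Ico (0:ℝ) 1)
    (hpos : ∀ t ∈ Set.Ico (0:ℝ) 1, 0 < omegaHat ν t) :
    ∃ s : ℕ → ℝ, s 0 = r ∧ (∀ j, s j ∈ Set.Ico r 1) ∧
      (∀ j, omegaHat ν (s j) = omegaHat ν r * (1/2) ^ j) ∧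
      StrictMono s ∧ (⋃ j, Set.Ico (s j) (s (j+1))) = Set.Ico r 1 := by
  have hW : 0 < omegaHat ν r := hpos r hr
  have H : ∀ j : ℕ, ∃ s ∈ Set.Ico r 1, omegaHat ν s = omegaHat ν r * (1/2) ^ j := by
    intro j
    apply wt_ivt hint hr (by positivity)
    nlinarith [pow_le_one₀ (by norm_num : (0:ℝ) ≤ 1/2) (by norm_num : (1/2:ℝ) ≤ 1) (n := j)]
  choose s0 hs0 hval0 using H
  set s : ℕ → ℝ := fun j => if j = 0 then r else s0 j with hsdef
  have hmem : ∀ j, s j ∈ Set.Ico r 1 := by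
    intro j; by_cases h : j = 0
    · subst h; simp only [hsdef, if_pos rfl]; exact ⟨le_rfl, hr.2⟩
    · simpa [hsdef, h] using hs0 j
  have hval : ∀ j, omegaHat ν (s j) = omegaHat ν r * (1/2) ^ j := by
    intro j; by_cases h : j = 0
    · simp [hsdef, h]
    · simpa [hsdef, h] using hval0 j
  have hmono : StrictMono s := by
    apply strictMono_nat_of_lt_succ
    intro j
    by_contra h
    push_neg at h
    have h1 : omegaHat ν (s j) ≤ omegaHat ν (s (j+1)) :=
      wt_hat_antitone hnn hint (hr.1.trans (hmem (j+1)).1) h (hmem j).2.le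
    rw [hval j, hval (j+1)] at h1
    have h2 : (0:ℝ) < (1/2:ℝ)^j := by positivity
    rw [pow_succ] at h1
    nlinarith [mul_pos hW h2]
  refine ⟨s, by simp [hsdef], hmem, hval, hmono, ?_⟩
  apply Set.Subset.antisymm
  · intro t ht
    simp only [Set.mem_iUnion] at ht
    obtain ⟨j, hj⟩ := ht
    exact ⟨(hmem j).1.trans hj.1, hj.2.trans (hmem (j+1)).2⟩
  · intro t ht
    have htpos : 0 < omegaHat ν t := hpos t ⟨hr.1.trans ht.1, ht.2⟩
    obtain ⟨j, hj⟩ := exists_pow_lt_of_lt_one (div_pos htpos hW) (by norm_num : (1/2:ℝ) < 1)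
    have hjlt : t < s j := by
      by_contra h
      push_neg at h
      have := wt_hat_antitone hnn hint (hr.1.trans (hmem j).1) h ht.2.le
      rw [hval j] at this
      rw [lt_div_iff₀ hW] at hj
      nlinarith
    have hex : ∃ j, t < s j := ⟨j, hjlt⟩
    classical
    set n := Nat.find hex with hn
    have hnspec : t < s n := Nat.find_spec hex
    have hn0 : n ≠ 0 := by
      intro h
      rw [h] at hnspec
      simp [hsdef] at hnspec
      exact absurd ht.1 (not_le.2 hnspec)
    have hprev : s (n - 1) ≤ t := by
      by_contra h
      push_neg at h
      exact (Nat.find_min hex (Nat.sub_lt (Nat.pos_of_ne_zero hn0) one_pos)) h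
    simp only [Set.mem_iUnion]
    refine ⟨n - 1, hprev, ?_⟩
    rwa [Nat.sub_add_cancel (Nat.one_le_iff_ne_zero.2 hn0)]

end Weight


lemma rpow_le_max {A B u e : ℝ} (hA : 0 < A) (hAu : A ≤ u) (huB : u ≤ B) :
    u ^ e ≤ max (A ^ e) (B ^ e) := by
  rcases le_or_gt 0 e with he | he
  · exact le_max_of_le_right (Real.rpow_le_rpow (hA.le.trans hAu) huB he)
  · exact le_max_of_le_left (Real.rpow_le_rpow_of_nonpos hA hAu he.le)

lemma min_le_rpow {A B u e : ℝ} (hA : 0 < A) (hAu : A ≤ u) (huB : u ≤ B) :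
    min (A ^ e) (B ^ e) ≤ u ^ e := by
  rcases le_or_gt 0 e with he | he
  · exact (min_le_left _ _).trans (Real.rpow_le_rpow hA.le hAu he)
  · exact (min_le_right _ _).trans
      (Real.rpow_le_rpow_of_nonpos (hA.trans_le hAu) huB he.le)

lemma key_arith_max {W α : ℝ} (hW : 0 < W) (j : ℕ) :
    max ((W * (1/2) ^ (j+1)) ^ (α-1)) ((W * (1/2) ^ j) ^ (α-1)) *
        (W * (1/2) ^ j - W * (1/2) ^ (j+1))
      = max ((1/2:ℝ) ^ (α-1)) 1 * (1/2) * W ^ α * (((1/2:ℝ) ^ α) ^ j) := by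
  have hPpos : (0:ℝ) < W * (1/2) ^ j := by positivity
  have h1 : W * (1/2:ℝ) ^ (j+1) = (W * (1/2) ^ j) * (1/2) := by ring
  have h2 : ((W * (1/2) ^ j) * (1/2:ℝ)) ^ (α-1)
      = (W * (1/2) ^ j) ^ (α-1) * (1/2:ℝ) ^ (α-1) :=
    Real.mul_rpow hPpos.le (by norm_num)
  rw [h1, h2]
  have h3 : max ((W * (1/2) ^ j) ^ (α-1) * (1/2:ℝ) ^ (α-1)) ((W * (1/2) ^ j) ^ (α-1))
      = (W * (1/2) ^ j) ^ (α-1) * max ((1/2:ℝ) ^ (α-1)) 1 := by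
    rw [mul_max_of_nonneg _ _ (Real.rpow_nonneg hPpos.le _), mul_one]
  rw [h3]
  have h4 : W * (1/2:ℝ) ^ j - (W * (1/2) ^ j) * (1/2) = (W * (1/2) ^ j) * (1/2) := by ring
  rw [h4]
  have h5 : (W * (1/2:ℝ) ^ j) ^ (α-1) * (W * (1/2) ^ j) = (W * (1/2) ^ j) ^ α := by
    rw [← Real.rpow_add_one hPpos.ne']
    ring_nf
  have h6 : (W * (1/2:ℝ) ^ j) ^ α = W ^ α * ((1/2:ℝ) ^ α) ^ j := by
    rw [Real.mul_rpow hW.le (by positivity), ← Real.rpow_natCast ((1/2:ℝ)) j,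
      ← Real.rpow_mul (by norm_num), mul_comm (j:ℝ) α, Real.rpow_mul (by norm_num),
      Real.rpow_natCast]
  calc (W * (1/2:ℝ)^j) ^ (α-1) * max ((1/2:ℝ) ^ (α-1)) 1 * ((W * (1/2)^j) * (1/2))
      = ((W * (1/2:ℝ)^j) ^ (α-1) * (W * (1/2)^j)) * (max ((1/2:ℝ) ^ (α-1)) 1 * (1/2)) := by
        ring
    _ = max ((1/2:ℝ) ^ (α-1)) 1 * (1/2) * W ^ α * (((1/2:ℝ) ^ α) ^ j) := by
        rw [h5, h6]; ring

lemma key_arith_min {W α : ℝ} (hW : 0 < W) :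
    min ((W * (1/2)) ^ (α-1)) (W ^ (α-1)) * (W - W * (1/2))
      = min ((1/2:ℝ) ^ (α-1)) 1 * (1/2) * W ^ α := by
  have h2 : (W * (1/2:ℝ)) ^ (α-1) = W ^ (α-1) * (1/2:ℝ) ^ (α-1) :=
    Real.mul_rpow hW.le (by norm_num)
  have h3 : min (W ^ (α-1) * (1/2:ℝ) ^ (α-1)) (W ^ (α-1))
      = W ^ (α-1) * min ((1/2:ℝ) ^ (α-1)) 1 := by
    rw [mul_min_of_nonneg _ _ (Real.rpow_nonneg hW.le _), mul_one]
  have h5 : W ^ (α-1) * W = W ^ α := by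
    rw [← Real.rpow_add_one hW.ne']; ring_nf
  rw [h2, h3]
  calc W ^ (α-1) * min ((1/2:ℝ) ^ (α-1)) 1 * (W - W * (1/2))
      = (W ^ (α-1) * W) * (min ((1/2:ℝ) ^ (α-1)) 1 * (1/2)) := by ring
    _ = min ((1/2:ℝ) ^ (α-1)) 1 * (1/2) * W ^ α := by rw [h5]; ring

section Weight2

variable {ν : ℝ → ℝ} (hnn : ∀ r ∈ Set.Ico (0:ℝ) 1, 0 ≤ ν r)
  (hint : IntegrableOn ν (Set.Ico 0 1))

include hnn hint in
lemma wt_mu_lint_bounds {α : ℝ} (hα : 0 < α)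
    (hpos : ∀ t ∈ Set.Ico (0:ℝ) 1, 0 < omegaHat ν t) {r : ℝ} (hr : r ∈ Set.Ico (0:ℝ) 1) :
    ENNReal.ofReal (min ((1/2:ℝ) ^ (α-1)) 1 * (1/2) * omegaHat ν r ^ α) ≤
      (∫⁻ t in Set.Ico r 1, ENNReal.ofReal (ν t * omegaHat ν t ^ (α-1))) ∧
    (∫⁻ t in Set.Ico r 1, ENNReal.ofReal (ν t * omegaHat ν t ^ (α-1))) ≤
      ENNReal.ofReal (max ((1/2:ℝ) ^ (α-1)) 1 * (1/2) * omegaHat ν r ^ α *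
        (1 - (1/2:ℝ) ^ α)⁻¹) := by
  obtain ⟨s, hs0, hmem, hval, hmono, hunion⟩ := wt_hat_seq hnn hint hr hpos
  set W := omegaHat ν r with hWdef
  have hW : 0 < W := hpos r hr
  have hs_nonneg : ∀ j, 0 ≤ s j := fun j => hr.1.trans (hmem j).1
  have hhat_mem : ∀ j, ∀ t ∈ Set.Ico (s j) (s (j+1)),
      W * (1/2) ^ (j+1) ≤ omegaHat ν t ∧ omegaHat ν t ≤ W * (1/2) ^ j := by
    intro j t ht
    constructor
    · rw [← hval (j+1)]
      exact wt_hat_antitone hnn hint ((hs_nonneg j).trans ht.1) ht.2.le (hmem (j+1)).2.le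
    · rw [← hval j]
      exact wt_hat_antitone hnn hint (hs_nonneg j) ht.1 (ht.2.trans (hmem (j+1)).2).le
  have ht01 : ∀ j, ∀ t ∈ Set.Ico (s j) (s (j+1)), t ∈ Set.Ico (0:ℝ) 1 := by
    intro j t ht
    exact ⟨(hs_nonneg j).trans ht.1, ht.2.trans (hmem (j+1)).2⟩
  -- decomposition
  have hdisj : Pairwise (Function.onFun Disjoint (fun j => Set.Ico (s j) (s (j+1)))) := by
    intro i j hij
    rcases lt_or_gt_of_ne hij with h | h
    · exact Set.Ico_disjoint_Ico.2 ((min_le_left _ _).trans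
        ((hmono.monotone h).trans (le_max_right _ _)))
    · exact Set.Ico_disjoint_Ico.2 ((min_le_right _ _).trans
        ((hmono.monotone h).trans (le_max_left _ _)))
  have hsum : (∫⁻ t in Set.Ico r 1, ENNReal.ofReal (ν t * omegaHat ν t ^ (α-1)))
      = ∑' j : ℕ, ∫⁻ t in Set.Ico (s j) (s (j+1)),
          ENNReal.ofReal (ν t * omegaHat ν t ^ (α-1)) := by
    rw [← hunion, lintegral_iUnion (fun j => measurableSet_Ico) hdisj]
  constructor
  · -- lower bound
    have hsub : Set.Ico (s 0) (s 1) ⊆ Set.Ico r 1 := by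
      rw [← hunion]; exact Set.subset_iUnion (fun j => Set.Ico (s j) (s (j+1))) 0
    refine le_trans ?_ (lintegral_mono_set hsub)
    have hpt : ∀ t ∈ Set.Ico (s 0) (s 1),
        ENNReal.ofReal (min ((W * (1/2)) ^ (α-1)) (W ^ (α-1)) * ν t) ≤
          ENNReal.ofReal (ν t * omegaHat ν t ^ (α-1)) := by
      intro t ht
      apply ENNReal.ofReal_le_ofReal
      have h01 := ht01 0 t ht
      have hb := hhat_mem 0 t ht
      have hν : 0 ≤ ν t := hnn t h01
      have hminle : min ((W * (1/2)) ^ (α-1)) (W ^ (α-1)) ≤ omegaHat ν t ^ (α-1) := by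
        apply min_le_rpow (by positivity) (by simpa using hb.1) (by simpa using hb.2)
      calc min ((W * (1/2)) ^ (α-1)) (W ^ (α-1)) * ν t
          ≤ omegaHat ν t ^ (α-1) * ν t := mul_le_mul_of_nonneg_right hminle hν
        _ = ν t * omegaHat ν t ^ (α-1) := mul_comm _ _
    have hminnn : 0 ≤ min ((W * (1/2)) ^ (α-1)) (W ^ (α-1)) := by
      apply le_min <;> positivity
    have heq := wt_lint_const_mul hnn hint (hs_nonneg 0) (hmono.le_iff_le.2 (by norm_num) :
      s 0 ≤ s 1) (hmem 1).2.le hminnn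
    calc ENNReal.ofReal (min ((1/2:ℝ) ^ (α-1)) 1 * (1/2) * W ^ α)
        = ENNReal.ofReal (min ((W * (1/2)) ^ (α-1)) (W ^ (α-1)) *
            (omegaHat ν (s 0) - omegaHat ν (s 1))) := by
          rw [hval 0, hval 1]
          rw [pow_zero, pow_one, mul_one]
          rw [key_arith_min hW]
      _ = ∫⁻ t in Set.Ico (s 0) (s 1),
            ENNReal.ofReal (min ((W * (1/2)) ^ (α-1)) (W ^ (α-1)) * ν t) := heq.symm
      _ ≤ ∫⁻ t in Set.Ico (s 0) (s 1), ENNReal.ofReal (ν t * omegaHat ν t ^ (α-1)) :=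
          setLIntegral_mono' measurableSet_Ico hpt
  · -- upper bound
    rw [hsum]
    have hQ1 : ((1/2:ℝ) ^ α) < 1 := Real.rpow_lt_one (by norm_num) (by norm_num) hα
    have hQ0 : (0:ℝ) < (1/2:ℝ) ^ α := Real.rpow_pos_of_pos (by norm_num) _
    have hterm : ∀ j : ℕ, (∫⁻ t in Set.Ico (s j) (s (j+1)),
        ENNReal.ofReal (ν t * omegaHat ν t ^ (α-1))) ≤
        ENNReal.ofReal (max ((1/2:ℝ) ^ (α-1)) 1 * (1/2) * W ^ α) *
          ENNReal.ofReal ((1/2:ℝ) ^ α) ^ j := by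
      intro j
      set Kj := max ((W * (1/2) ^ (j+1)) ^ (α-1)) ((W * (1/2) ^ j) ^ (α-1)) with hKj
      have hKnn : 0 ≤ Kj := le_max_of_le_right (by positivity)
      have hpt : ∀ t ∈ Set.Ico (s j) (s (j+1)),
          ENNReal.ofReal (ν t * omegaHat ν t ^ (α-1)) ≤ ENNReal.ofReal (Kj * ν t) := by
        intro t ht
        apply ENNReal.ofReal_le_ofReal
        have hb := hhat_mem j t ht
        have hν : 0 ≤ ν t := hnn t (ht01 j t ht)
        calc ν t * omegaHat ν t ^ (α-1) = omegaHat ν t ^ (α-1) * ν t := mul_comm _ _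
          _ ≤ Kj * ν t := mul_le_mul_of_nonneg_right
              (rpow_le_max (by positivity) hb.1 hb.2) hν
      calc (∫⁻ t in Set.Ico (s j) (s (j+1)), ENNReal.ofReal (ν t * omegaHat ν t ^ (α-1)))
          ≤ ∫⁻ t in Set.Ico (s j) (s (j+1)), ENNReal.ofReal (Kj * ν t) :=
            setLIntegral_mono' measurableSet_Ico hpt
        _ = ENNReal.ofReal (Kj * (omegaHat ν (s j) - omegaHat ν (s (j+1)))) :=
            wt_lint_const_mul hnn hint (hs_nonneg j) (hmono.monotone (Nat.le_succ j))
              (hmem (j+1)).2.le hKnn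
        _ = ENNReal.ofReal ((max ((1/2:ℝ) ^ (α-1)) 1 * (1/2) * W ^ α) *
              (((1/2:ℝ) ^ α) ^ j)) := by
            rw [hval j, hval (j+1), hKj, key_arith_max hW]
        _ = ENNReal.ofReal (max ((1/2:ℝ) ^ (α-1)) 1 * (1/2) * W ^ α) *
              ENNReal.ofReal ((1/2:ℝ) ^ α) ^ j := by
            rw [ENNReal.ofReal_mul (by positivity), ENNReal.ofReal_pow hQ0.le]
    calc (∑' j : ℕ, ∫⁻ t in Set.Ico (s j) (s (j+1)),
          ENNReal.ofReal (ν t * omegaHat ν t ^ (α-1)))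
        ≤ ∑' j : ℕ, ENNReal.ofReal (max ((1/2:ℝ) ^ (α-1)) 1 * (1/2) * W ^ α) *
            ENNReal.ofReal ((1/2:ℝ) ^ α) ^ j := ENNReal.tsum_le_tsum hterm
      _ = ENNReal.ofReal (max ((1/2:ℝ) ^ (α-1)) 1 * (1/2) * W ^ α) *
            (1 - ENNReal.ofReal ((1/2:ℝ) ^ α))⁻¹ := by
          rw [ENNReal.tsum_mul_left, ENNReal.tsum_geometric]
      _ = ENNReal.ofReal (max ((1/2:ℝ) ^ (α-1)) 1 * (1/2) * W ^ α *
            (1 - (1/2:ℝ) ^ α)⁻¹) := by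
          rw [← ENNReal.ofReal_one, ← ENNReal.ofReal_sub _ hQ0.le,
            ← ENNReal.ofReal_inv_of_pos (by linarith), ← ENNReal.ofReal_mul (by positivity)]

include hnn hint in
lemma wt_mu_weight {α : ℝ} (hα : 0 < α)
    (hpos : ∀ t ∈ Set.Ico (0:ℝ) 1, 0 < omegaHat ν t) :
    IntegrableOn (fun t => ν t * omegaHat ν t ^ (α-1)) (Set.Ico 0 1) ∧
    ∀ r ∈ Set.Ico (0:ℝ) 1,
      min ((1/2:ℝ) ^ (α-1)) 1 * (1/2) * omegaHat ν r ^ α ≤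
        omegaHat (fun t => ν t * omegaHat ν t ^ (α-1)) r ∧
      omegaHat (fun t => ν t * omegaHat ν t ^ (α-1)) r ≤
        max ((1/2:ℝ) ^ (α-1)) 1 * (1/2) * omegaHat ν r ^ α * (1 - (1/2:ℝ) ^ α)⁻¹ := by
  set μf := fun t => ν t * omegaHat ν t ^ (α-1) with hμf
  have hcont : ContinuousOn (fun t => omegaHat ν t ^ (α-1)) (Set.Ico 0 1) :=
    ((wt_hat_continuousOn hint).mono Set.Ico_subset_Icc_self).rpow_const
      (fun x hx => Or.inl (hpos x hx).ne')
  have hmeas0 : AEStronglyMeasurable μf (volume.restrict (Set.Ico 0 1)) :=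
    hint.aestronglyMeasurable.mul (hcont.aestronglyMeasurable measurableSet_Ico)
  have hae : ∀ r ∈ Set.Ico (0:ℝ) 1, 0 ≤ᵐ[volume.restrict (Set.Ico r 1)] μf := by
    intro r hr
    refine (MeasureTheory.ae_restrict_iff' measurableSet_Ico).2 (Filter.Eventually.of_forall ?_)
    intro t ht
    have ht01 : t ∈ Set.Ico (0:ℝ) 1 := ⟨hr.1.trans ht.1, ht.2⟩
    exact mul_nonneg (hnn t ht01) (Real.rpow_nonneg (hpos t ht01).le _)
  have h01 : (0:ℝ) ∈ Set.Ico (0:ℝ) 1 := ⟨le_rfl, by norm_num⟩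
  have hItg : IntegrableOn μf (Set.Ico 0 1) := by
    refine ⟨hmeas0, ?_⟩
    rw [hasFiniteIntegral_iff_ofReal (hae 0 h01)]
    exact lt_of_le_of_lt (wt_mu_lint_bounds hnn hint hα hpos h01).2 ENNReal.ofReal_lt_top
  refine ⟨hItg, fun r hr => ?_⟩
  have hsub : Set.Ico r 1 ⊆ Set.Ico (0:ℝ) 1 := Set.Ico_subset_Ico hr.1 le_rfl
  have hmeasr : AEStronglyMeasurable μf (volume.restrict (Set.Ico r 1)) :=
    hmeas0.mono_measure (Measure.restrict_mono hsub le_rfl)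
  have hkey : omegaHat μf r
      = (∫⁻ t in Set.Ico r 1, ENNReal.ofReal (μf t)).toReal := by
    have h1 : omegaHat μf r = ∫ t in Set.Ico r 1, μf t := by
      unfold omegaHat
      rw [intervalIntegral.integral_of_le hr.2.le, integral_Ioc_eq_integral_Ioo,
        ← integral_Ico_eq_integral_Ioo]
    rw [h1, integral_eq_lintegral_of_nonneg_ae (hae r hr) hmeasr]
  have hbnd := wt_mu_lint_bounds hnn hint hα hpos hr
  have hW : 0 < omegaHat ν r := hpos r hr
  have hQ1 : ((1/2:ℝ) ^ α) < 1 := Real.rpow_lt_one (by norm_num) (by norm_num) hα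
  constructor
  · rw [hkey]
    have := ENNReal.toReal_mono (ne_top_of_le_ne_top ENNReal.ofReal_ne_top hbnd.2) hbnd.1
    rwa [ENNReal.toReal_ofReal (mul_nonneg (by positivity) (Real.rpow_nonneg hW.le _))] at this
  · rw [hkey]
    exact ENNReal.toReal_le_of_le_ofReal (mul_nonneg (mul_nonneg (by positivity) (Real.rpow_nonneg hW.le _)) (inv_nonneg.2 (by linarith))) hbnd.2

end Weight2

lemma sq_le_two_mul_two_pow (j : ℕ) : ((j:ℝ))^2 ≤ 2 * 2^j := by
  induction j with
  | zero => norm_num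
  | succ j ih =>
    by_cases hj : 3 ≤ j
    · have hj' : (3:ℝ) ≤ (j:ℝ) := by exact_mod_cast hj
      have h2 : (2:ℝ)^(j+1) = 2^j*2 := pow_succ 2 j
      push_cast
      rw [h2]
      nlinarith [ih]
    · push_neg at hj
      interval_cases j <;> norm_num

lemma growth_bound {C : ℝ} (hC : 1 ≤ C) (j : ℕ) :
    C ^ j * Real.exp (-(2:ℝ)^j / 8) ≤ Real.exp (4 * Real.log (2*C)^2) * (1/2)^j := by
  have hL : 0 ≤ Real.log (2*C) := Real.log_nonneg (by linarith)
  set L := Real.log (2*C) with hLdef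
  have hsq := sq_le_two_mul_two_pow j
  have hkey : (j:ℝ)*L - (2:ℝ)^j/8 ≤ 4*L^2 := by
    nlinarith [sq_nonneg ((j:ℝ)/4 - 2*L)]
  have hexp : Real.exp ((j:ℝ) * L) = (2*C)^j := by
    rw [hLdef, ← Real.log_pow, Real.exp_log (by positivity)]
  have h1 : C^j * Real.exp (-(2:ℝ)^j / 8) = Real.exp ((j:ℝ)*L - (2:ℝ)^j/8) * (1/2)^j := by
    rw [sub_eq_add_neg, Real.exp_add, hexp]
    rw [show -((2:ℝ)^j/8) = -(2:ℝ)^j/8 by ring]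
    rw [mul_comm ((2*C)^j), mul_assoc, ← mul_pow]
    ring_nf
  rw [h1]
  apply mul_le_mul_of_nonneg_right _ (by positivity)
  exact Real.exp_le_exp.2 hkey

section Weight3

variable {ν : ℝ → ℝ} (hnn : ∀ r ∈ Set.Ico (0:ℝ) 1, 0 ≤ ν r)
  (hint : IntegrableOn ν (Set.Ico 0 1))

omit hnn hint in
lemma wt_doubling_iter {C : ℝ} (hC : 1 ≤ C)
    (hD : ∀ r ∈ Set.Ico (0:ℝ) 1, omegaHat ν r ≤ C * omegaHat ν ((1 + r) / 2)) :
    ∀ n m : ℕ, omegaHat ν (1 - (1/2:ℝ)^n) ≤ C^m * omegaHat ν (1 - (1/2:ℝ)^(n+m)) := by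
  intro n m
  induction m with
  | zero => simp
  | succ m ih =>
    have hpow1 : ((1/2:ℝ))^(n+m) ≤ 1 :=
      pow_le_one₀ (by norm_num) (by norm_num)
    have hpow0 : (0:ℝ) < (1/2:ℝ)^(n+m) := by positivity
    have hmem : (1 - (1/2:ℝ)^(n+m)) ∈ Set.Ico (0:ℝ) 1 := ⟨by linarith, by linarith⟩
    have h2 := hD _ hmem
    have hmid : (1 + (1 - (1/2:ℝ)^(n+m)))/2 = 1 - (1/2:ℝ)^(n+m+1) := by
      rw [pow_succ]; ring
    rw [hmid] at h2
    calc omegaHat ν (1 - (1/2:ℝ)^n) ≤ C^m * omegaHat ν (1 - (1/2:ℝ)^(n+m)) := ih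
      _ ≤ C^m * (C * omegaHat ν (1 - (1/2:ℝ)^(n+m+1))) :=
          mul_le_mul_of_nonneg_left h2 (pow_nonneg (by linarith) m)
      _ = C^(m+1) * omegaHat ν (1 - (1/2:ℝ)^(n+(m+1))) := by ring_nf

include hint in
lemma wt_pow_integrable {x : ℝ} (hx : 0 < x) :
    IntegrableOn (fun r => r ^ x * ν r) (Set.Ico 0 1) := by
  have hcont : Continuous (fun r : ℝ => r ^ x) :=
    continuous_iff_continuousAt.2 fun r => Real.continuousAt_rpow_const r x (Or.inr hx.le)
  apply MeasureTheory.Integrable.mono' (hint.abs)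
    (hcont.aestronglyMeasurable.restrict.mul hint.aestronglyMeasurable)
  refine (MeasureTheory.ae_restrict_iff' measurableSet_Ico).2 (Filter.Eventually.of_forall ?_)
  intro t ht
  simp only [Pi.mul_apply]
  rw [norm_mul, Real.norm_eq_abs, Real.norm_eq_abs]
  have h1 : |t ^ x| = t ^ x := abs_of_nonneg (Real.rpow_nonneg ht.1 x)
  rw [h1]
  have h2 : t ^ x ≤ 1 := Real.rpow_le_one ht.1 ht.2.le hx.le
  nlinarith [abs_nonneg (ν t), Real.rpow_nonneg ht.1 x]

include hnn hint in
lemma wt_moment_bounds {C : ℝ} (hC : 1 ≤ C)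
    (hD : ∀ r ∈ Set.Ico (0:ℝ) 1, omegaHat ν r ≤ C * omegaHat ν ((1 + r) / 2))
    {x : ℝ} (hx : 1 ≤ x) :
    omegaHat ν (1 - 1/(2*x)) / 2 ≤ momentW ν x ∧
      momentW ν x ≤ (Real.exp (4 * Real.log (2*C)^2) + 1) * omegaHat ν (1 - 1/(2*x)) := by
  have hx0 : 0 < x := lt_of_lt_of_le one_pos hx
  set t : ℝ := 1 - 1/(2*x) with htdef
  have hu0 : 0 < 1/(2*x) := by positivity
  have hu2 : 1/(2*x) ≤ 1/2 := by
    rw [div_le_div_iff₀ (by positivity) (by norm_num)]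
    linarith
  have htmem : t ∈ Set.Ico (0:ℝ) 1 := ⟨by rw [htdef]; linarith, by rw [htdef]; linarith⟩
  -- interval integrability of the integrand
  have hpint : IntegrableOn (fun r => r ^ x * ν r) (Set.Icc 0 1) :=
    (integrableOn_Icc_iff_integrableOn_Ico).2 (wt_pow_integrable hint hx0)
  have hII : ∀ a b : ℝ, 0 ≤ a → a ≤ 1 → 0 ≤ b → b ≤ 1 →
      IntervalIntegrable (fun r => r ^ x * ν r) volume a b := by
    intro a b ha ha1 hb hb1
    exact (hpint.mono_set (Set.uIcc_subset_Icc ⟨ha, ha1⟩ ⟨hb, hb1⟩)).intervalIntegrable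
  have hIIν : ∀ a b : ℝ, 0 ≤ a → a ≤ 1 → 0 ≤ b → b ≤ 1 →
      IntervalIntegrable ν volume a b := by
    intro a b ha ha1 hb hb1
    exact ((wt_integrableOn_Icc hint).mono_set
      (Set.uIcc_subset_Icc ⟨ha, ha1⟩ ⟨hb, hb1⟩)).intervalIntegrable
  -- a.e. nonneg on pieces
  have haeN : ∀ a b : ℝ, 0 ≤ a → b ≤ 1 →
      ∀ᵐ s ∂(volume.restrict (Set.Icc a b)), 0 ≤ ν s := by
    intro a b ha hb1
    exact wt_ae_nonneg hnn measurableSet_Icc (Set.Icc_subset_Icc ha hb1)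
  constructor
  · -- LOWER BOUND
    have hsplit : momentW ν x = (∫ r in (0:ℝ)..t, r ^ x * ν r) + ∫ r in t..1, r ^ x * ν r := by
      unfold momentW
      rw [intervalIntegral.integral_add_adjacent_intervals
        (hII 0 t le_rfl zero_le_one htmem.1 htmem.2.le)
        (hII t 1 htmem.1 htmem.2.le zero_le_one le_rfl)]
    have h1 : 0 ≤ ∫ r in (0:ℝ)..t, r ^ x * ν r := by
      apply intervalIntegral.integral_nonneg_of_ae_restrict htmem.1
      filter_upwards [haeN 0 t le_rfl htmem.2.le,
        MeasureTheory.ae_restrict_mem measurableSet_Icc] with s hs hmem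
      exact mul_nonneg (Real.rpow_nonneg hmem.1 x) hs
    have h2 : t ^ x * omegaHat ν t ≤ ∫ r in t..1, r ^ x * ν r := by
      have hc : (∫ r in t..1, t ^ x * ν r) ≤ ∫ r in t..1, r ^ x * ν r := by
        apply intervalIntegral.integral_mono_ae_restrict htmem.2.le
          ((hIIν t 1 htmem.1 htmem.2.le zero_le_one le_rfl).const_mul _)
          (hII t 1 htmem.1 htmem.2.le zero_le_one le_rfl)
        filter_upwards [haeN t 1 htmem.1 le_rfl,
          MeasureTheory.ae_restrict_mem measurableSet_Icc] with s hs hmem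
        exact mul_le_mul_of_nonneg_right
          (Real.rpow_le_rpow htmem.1 hmem.1 hx0.le) hs
      rwa [intervalIntegral.integral_const_mul] at hc
    have h3 : (1/2:ℝ) ≤ t ^ x := by
      have hb := one_add_mul_self_le_rpow_one_add
        (show (-1:ℝ) ≤ -(1/(2*x)) by linarith) hx
      have : 1 + x * -(1/(2*x)) = 1/2 := by field_simp; ring
      rw [this] at hb
      have ht1 : (1:ℝ) + -(1/(2*x)) = t := by rw [htdef]; ring
      rwa [ht1] at hb
    have hhatnn : 0 ≤ omegaHat ν t := wt_hat_nonneg hnn htmem.1 htmem.2.le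
    nlinarith [mul_le_mul_of_nonneg_right h3 hhatnn]
  · -- UPPER BOUND
    set k : ℕ := Nat.clog 2 ⌈2*x⌉₊ with hkdef
    have hceil2 : 2 ≤ ⌈2*x⌉₊ := by
      have h1 : (2:ℝ) ≤ 2*x := by linarith
      have h2 := Nat.le_ceil (2*x)
      exact_mod_cast h1.trans h2
    have hk1 : 1 ≤ k := Nat.clog_pos one_lt_two hceil2
    have h2x_le : 2*x ≤ (2:ℝ)^k := by
      have h1 := Nat.le_ceil (2*x)
      have h2 : (⌈2*x⌉₊:ℝ) ≤ ((2^k : ℕ):ℝ) := by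
        exact_mod_cast Nat.le_pow_clog one_lt_two _
      calc 2*x ≤ (⌈2*x⌉₊:ℝ) := h1
        _ ≤ ((2^k:ℕ):ℝ) := h2
        _ = (2:ℝ)^k := by push_cast; ring
    have hklt : (2:ℝ)^k < 4*x := by
      have h1 : (2:ℕ)^(k-1) < ⌈2*x⌉₊ := Nat.pow_pred_clog_lt_self one_lt_two (by omega)
      have h2 : (⌈2*x⌉₊ : ℝ) < 2*x + 1 := Nat.ceil_lt_add_one (by positivity)
      have h1' : ((2:ℕ)^(k-1):ℝ) + 1 ≤ (⌈2*x⌉₊ : ℝ) := by exact_mod_cast h1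
      have h3 : ((2:ℝ))^(k-1) < 2*x := by
        have : ((2:ℕ)^(k-1):ℝ) = (2:ℝ)^(k-1) := by push_cast; ring
        linarith [this ▸ h1', h2]
      have h4 : (2:ℝ)^k = 2^(k-1) * 2 := by
        rw [← pow_succ]; congr 1; omega
      linarith
    set T : ℕ → ℝ := fun n => 1 - (1/2:ℝ)^n with hTdef
    have hT0 : T 0 = 0 := by simp [hTdef]
    have hTmem : ∀ n, T n ∈ Set.Ico (0:ℝ) 1 := by
      intro n
      have h1 : ((1/2:ℝ))^n ≤ 1 := pow_le_one₀ (by norm_num) (by norm_num)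
      have h2 : (0:ℝ) < (1/2:ℝ)^n := by positivity
      exact ⟨by simp only [hTdef]; linarith, by simp only [hTdef]; linarith⟩
    have hTmono : ∀ n m : ℕ, n ≤ m → T n ≤ T m := by
      intro n m hnm
      simp only [hTdef]
      have := pow_le_pow_of_le_one (by norm_num : (0:ℝ) ≤ 1/2) (by norm_num) hnm
      linarith
    have htTk : t ≤ T k := by
      simp only [hTdef, htdef]
      have h1 : ((1/2:ℝ))^k = 1/(2:ℝ)^k := by rw [div_pow, one_pow]
      rw [h1]
      have h2 : 1/(2:ℝ)^k ≤ 1/(2*x) :=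
        one_div_le_one_div_of_le (by positivity) h2x_le
      linarith
    have hEnn : (0:ℝ) ≤ Real.exp (4 * Real.log (2*C)^2) := (Real.exp_pos _).le
    have hhat_t_nn : 0 ≤ omegaHat ν t := wt_hat_nonneg hnn htmem.1 htmem.2.le
    -- split at T k
    have hsplit : momentW ν x
        = (∫ r in (0:ℝ)..(T k), r ^ x * ν r) + ∫ r in (T k)..1, r ^ x * ν r := by
      unfold momentW
      rw [intervalIntegral.integral_add_adjacent_intervals
        (hII 0 (T k) le_rfl zero_le_one (hTmem k).1 (hTmem k).2.le)
        (hII (T k) 1 (hTmem k).1 (hTmem k).2.le zero_le_one le_rfl)]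
    -- tail bound
    have htail : (∫ r in (T k)..1, r ^ x * ν r) ≤ omegaHat ν t := by
      have hc : (∫ r in (T k)..1, r ^ x * ν r) ≤ ∫ r in (T k)..1, ν r := by
        apply intervalIntegral.integral_mono_ae_restrict (hTmem k).2.le
          (hII (T k) 1 (hTmem k).1 (hTmem k).2.le zero_le_one le_rfl)
          (hIIν (T k) 1 (hTmem k).1 (hTmem k).2.le zero_le_one le_rfl)
        filter_upwards [haeN (T k) 1 (hTmem k).1 le_rfl,
          MeasureTheory.ae_restrict_mem measurableSet_Icc] with r hr hmem
        have hr0 : 0 ≤ r := (hTmem k).1.trans hmem.1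
        have : r ^ x ≤ 1 := Real.rpow_le_one hr0 hmem.2 hx0.le
        nlinarith
      have hanti : omegaHat ν (T k) ≤ omegaHat ν t :=
        wt_hat_antitone hnn hint htmem.1 htTk (hTmem k).2.le
      have heq : (∫ r in (T k)..1, ν r) = omegaHat ν (T k) := rfl
      exact (hc.trans_eq heq).trans hanti
    -- main sum
    have hsum_eq : (∫ r in (0:ℝ)..(T k), r ^ x * ν r)
        = ∑ n ∈ Finset.range k, ∫ r in (T n)..(T (n+1)), r ^ x * ν r := by
      have := intervalIntegral.sum_integral_adjacent_intervals (a := T) (n := k)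
        (fun j _ => hII (T j) (T (j+1)) (hTmem j).1 (hTmem j).2.le
          (hTmem (j+1)).1 (hTmem (j+1)).2.le)
      rw [hT0] at this
      exact this.symm
    have hterm : ∀ n ∈ Finset.range k, (∫ r in (T n)..(T (n+1)), r ^ x * ν r) ≤
        Real.exp (4 * Real.log (2*C)^2) * omegaHat ν t * ((1/2:ℝ))^(k-n) := by
      intro n hn
      have hnk : n < k := Finset.mem_range.1 hn
      have hTle : T n ≤ T (n+1) := hTmono n (n+1) (Nat.le_succ n)
      have hTx_nn : 0 ≤ T (n+1) ^ x := Real.rpow_nonneg (hTmem (n+1)).1 x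
      -- step 1
      have h1 : (∫ r in (T n)..(T (n+1)), r ^ x * ν r) ≤ T (n+1) ^ x * omegaHat ν (T n) := by
        have hc : (∫ r in (T n)..(T (n+1)), r ^ x * ν r)
            ≤ ∫ r in (T n)..(T (n+1)), T (n+1) ^ x * ν r := by
          apply intervalIntegral.integral_mono_ae_restrict hTle
            (hII (T n) (T (n+1)) (hTmem n).1 (hTmem n).2.le (hTmem (n+1)).1 (hTmem (n+1)).2.le)
            ((hIIν (T n) (T (n+1)) (hTmem n).1 (hTmem n).2.le (hTmem (n+1)).1
              (hTmem (n+1)).2.le).const_mul _)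
          filter_upwards [haeN (T n) (T (n+1)) (hTmem n).1 (hTmem (n+1)).2.le,
            MeasureTheory.ae_restrict_mem measurableSet_Icc] with r hr hmem
          have hr0 : 0 ≤ r := (hTmem n).1.trans hmem.1
          exact mul_le_mul_of_nonneg_right
            (Real.rpow_le_rpow hr0 hmem.2 hx0.le) hr
        rw [intervalIntegral.integral_const_mul] at hc
        have hval : (∫ r in (T n)..(T (n+1)), ν r)
            = omegaHat ν (T n) - omegaHat ν (T (n+1)) := by
          have := wt_hat_split hint (hTmem n).1 hTle (hTmem (n+1)).2.le
          linarith
        rw [hval] at hc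
        have hnn2 : 0 ≤ omegaHat ν (T (n+1)) :=
          wt_hat_nonneg hnn (hTmem (n+1)).1 (hTmem (n+1)).2.le
        nlinarith
      -- step 2 : doubling
      have h2 : omegaHat ν (T n) ≤ C^(k-n) * omegaHat ν t := by
        have hiter := wt_doubling_iter (ν := ν) hC hD n (k-n)
        have hke : n + (k-n) = k := by omega
        rw [hke] at hiter
        have hanti : omegaHat ν (T k) ≤ omegaHat ν t :=
          wt_hat_antitone hnn hint htmem.1 htTk (hTmem k).2.le
        calc omegaHat ν (T n) ≤ C^(k-n) * omegaHat ν (T k) := hiter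
          _ ≤ C^(k-n) * omegaHat ν t :=
            mul_le_mul_of_nonneg_left hanti (pow_nonneg (by linarith) _)
      -- step 3 : exponential decay
      have h3 : T (n+1) ^ x ≤ Real.exp (-(2:ℝ)^(k-n)/8) := by
        have hb : T (n+1) ≤ Real.exp (-((1/2:ℝ)^(n+1))) := by
          have := Real.add_one_le_exp (-((1/2:ℝ)^(n+1)))
          simp only [hTdef]
          linarith
        have h4 : T (n+1) ^ x ≤ Real.exp (-((1/2:ℝ)^(n+1))) ^ x :=
          Real.rpow_le_rpow (hTmem (n+1)).1 hb hx0.le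
        have h5 : Real.exp (-((1/2:ℝ)^(n+1))) ^ x = Real.exp (-((1/2:ℝ)^(n+1)) * x) :=
          (Real.exp_mul _ _).symm
        have harith : (2:ℝ)^(k-n)/8 ≤ (1/2:ℝ)^(n+1) * x := by
          have hpow : (2:ℝ)^(k-n) * 2^n = 2^k := by
            rw [← pow_add]; congr 1; omega
          have hhalf : ((1/2:ℝ))^(n+1) = 1/(2^n*2) := by
            rw [div_pow, one_pow, pow_succ]
          rw [hhalf, one_div_mul_eq_div, div_le_div_iff₀ (by norm_num) (by positivity)]
          nlinarith [hpow, hklt]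
        calc T (n+1) ^ x ≤ Real.exp (-((1/2:ℝ)^(n+1)) * x) := h4.trans_eq h5
          _ ≤ Real.exp (-(2:ℝ)^(k-n)/8) := Real.exp_le_exp.2 (by linarith [harith])
      calc (∫ r in (T n)..(T (n+1)), r ^ x * ν r)
          ≤ T (n+1) ^ x * omegaHat ν (T n) := h1
        _ ≤ Real.exp (-(2:ℝ)^(k-n)/8) * (C^(k-n) * omegaHat ν t) :=
            mul_le_mul h3 h2 (wt_hat_nonneg hnn (hTmem n).1 (hTmem n).2.le)
              (Real.exp_pos _).le
        _ = (C^(k-n) * Real.exp (-(2:ℝ)^(k-n)/8)) * omegaHat ν t := by ring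
        _ ≤ (Real.exp (4*Real.log (2*C)^2) * (1/2:ℝ)^(k-n)) * omegaHat ν t :=
            mul_le_mul_of_nonneg_right (growth_bound hC (k-n)) hhat_t_nn
        _ = Real.exp (4*Real.log (2*C)^2) * omegaHat ν t * (1/2:ℝ)^(k-n) := by ring
    have hgeo : ∑ n ∈ Finset.range k, ((1/2:ℝ))^(k-n) ≤ 1 := by
      have hterm2 : ∀ n ∈ Finset.range k, ((1/2:ℝ))^(k-n) = 2^n / 2^k := by
        intro n hn
        have hnk := (Finset.mem_range.1 hn).le
        have hpow : (2:ℝ)^(k-n) * 2^n = 2^k := by rw [← pow_add]; congr 1; omega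
        rw [div_pow, one_pow, div_eq_div_iff (by positivity) (by positivity)]
        nlinarith [hpow]
      rw [Finset.sum_congr rfl hterm2, ← Finset.sum_div, div_le_one (by positivity)]
      rw [geom_sum_eq (by norm_num : (2:ℝ) ≠ 1) k]
      have h2k : (0:ℝ) < 2^k := by positivity
      norm_num
    have hmain : (∫ r in (0:ℝ)..(T k), r ^ x * ν r)
        ≤ Real.exp (4*Real.log (2*C)^2) * omegaHat ν t := by
      rw [hsum_eq]
      calc (∑ n ∈ Finset.range k, ∫ r in (T n)..(T (n+1)), r ^ x * ν r)
          ≤ ∑ n ∈ Finset.range k,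
              Real.exp (4*Real.log (2*C)^2) * omegaHat ν t * ((1/2:ℝ))^(k-n) :=
            Finset.sum_le_sum hterm
        _ = Real.exp (4*Real.log (2*C)^2) * omegaHat ν t *
              ∑ n ∈ Finset.range k, ((1/2:ℝ))^(k-n) := by rw [← Finset.mul_sum]
        _ ≤ Real.exp (4*Real.log (2*C)^2) * omegaHat ν t * 1 :=
            mul_le_mul_of_nonneg_left hgeo (mul_nonneg hEnn hhat_t_nn)
        _ = Real.exp (4*Real.log (2*C)^2) * omegaHat ν t := mul_one _
    rw [hsplit]
    linarith [htail, hmain]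

end Weight3

/-- For `ω ∈ D̂` and `α>0`, `μ = ω ω̂^{α-1}` is a radial weight in `D̂`
and `μ_x ≍ (ω_x)^α` for `x ≥ 1`. -/
theorem weight_power_in_Dhat
    (ω : ℝ → ℝ) (hω : IsRadialWeight ω)
    (hpos : ∀ r ∈ Set.Ico (0:ℝ) 1, 0 < omegaHat ω r)
    (hD : InDhat ω)
    (α : ℝ) (hα : 0 < α)
    (μ : ℝ → ℝ) (hμ : μ = fun r => ω r * omegaHat ω r ^ (α - 1)) :
    IsRadialWeight μ ∧ InDhat μ ∧
      ∃ C : ℝ, 1 ≤ C ∧ ∀ x : ℝ, 1 ≤ x →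
        C⁻¹ * momentW ω x ^ α ≤ momentW μ x ∧ momentW μ x ≤ C * momentW ω x ^ α := by
  obtain ⟨hnn, hint⟩ := hω
  subst hμ
  set μ : ℝ → ℝ := fun r => ω r * omegaHat ω r ^ (α - 1) with hμdef
  -- normalize doubling constant
  obtain ⟨C₀, hC₀pos, hD₀⟩ := hD
  set C : ℝ := max C₀ 1 with hCdef
  have hC1 : 1 ≤ C := le_max_right _ _
  have hC0 : 0 < C := lt_of_lt_of_le one_pos hC1
  have hmid_mem : ∀ r ∈ Set.Ico (0:ℝ) 1, ((1 + r)/2) ∈ Set.Ico (0:ℝ) 1 := by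
    intro r hr
    constructor <;> [linarith [hr.1]; linarith [hr.2]]
  have hD' : ∀ r ∈ Set.Ico (0:ℝ) 1, omegaHat ω r ≤ C * omegaHat ω ((1 + r) / 2) := by
    intro r hr
    have h1 := hD₀ r hr
    have h2 : 0 ≤ omegaHat ω ((1 + r)/2) := (hpos _ (hmid_mem r hr)).le
    calc omegaHat ω r ≤ C₀ * omegaHat ω ((1 + r)/2) := h1
      _ ≤ C * omegaHat ω ((1 + r)/2) :=
        mul_le_mul_of_nonneg_right (le_max_left _ _) h2
  -- the weight μ
  obtain ⟨hμint, hμbnd0⟩ := wt_mu_weight hnn hint hα hpos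
  set c1 : ℝ := min ((1/2:ℝ) ^ (α-1)) 1 * (1/2) with hc1def
  set c2 : ℝ := max ((1/2:ℝ) ^ (α-1)) 1 * (1/2) * (1 - (1/2:ℝ) ^ α)⁻¹ with hc2def
  have hQ1 : ((1/2:ℝ) ^ α) < 1 := Real.rpow_lt_one (by norm_num) (by norm_num) hα
  have hc1pos : 0 < c1 := by
    apply mul_pos _ (by norm_num)
    exact lt_min (Real.rpow_pos_of_pos (by norm_num) _) one_pos
  have hc2pos : 0 < c2 := by
    apply mul_pos (mul_pos _ (by norm_num)) (inv_pos.2 (by linarith))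
    exact lt_of_lt_of_le one_pos (le_max_right _ _)
  have hμbnd : ∀ r ∈ Set.Ico (0:ℝ) 1,
      c1 * omegaHat ω r ^ α ≤ omegaHat μ r ∧ omegaHat μ r ≤ c2 * omegaHat ω r ^ α := by
    intro r hr
    obtain ⟨hl, hu⟩ := hμbnd0 r hr
    refine ⟨hl, ?_⟩
    calc omegaHat μ r
        ≤ max ((1/2:ℝ) ^ (α-1)) 1 * (1/2) * omegaHat ω r ^ α * (1 - (1/2:ℝ) ^ α)⁻¹ := hu
      _ = c2 * omegaHat ω r ^ α := by rw [hc2def]; ring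
  have hμnn : ∀ r ∈ Set.Ico (0:ℝ) 1, 0 ≤ μ r := fun r hr =>
    mul_nonneg (hnn r hr) (Real.rpow_nonneg (hpos r hr).le _)
  have hμrad : IsRadialWeight μ := ⟨hμnn, hμint⟩
  -- doubling for μ
  set Cμ : ℝ := max (c2 * C ^ α / c1) 1 with hCμdef
  have hCμ1 : 1 ≤ Cμ := le_max_right _ _
  have hDμ : ∀ r ∈ Set.Ico (0:ℝ) 1, omegaHat μ r ≤ Cμ * omegaHat μ ((1 + r) / 2) := by
    intro r hr
    have hmm := hmid_mem r hr
    have hb1 := (hμbnd r hr).2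
    have hb2 := (hμbnd _ hmm).1
    have hωr : 0 ≤ omegaHat ω r := (hpos r hr).le
    have hωm : 0 ≤ omegaHat ω ((1 + r)/2) := (hpos _ hmm).le
    have h3 : omegaHat ω r ^ α ≤ C ^ α * omegaHat ω ((1 + r)/2) ^ α := by
      rw [← Real.mul_rpow hC0.le hωm]
      exact Real.rpow_le_rpow hωr (hD' r hr) hα.le
    have h4 : omegaHat ω ((1 + r)/2) ^ α ≤ omegaHat μ ((1 + r)/2) / c1 := by
      rw [le_div_iff₀ hc1pos]
      linarith [hb2]
    have hμm0 : 0 ≤ omegaHat μ ((1 + r)/2) := by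
      have h5 : 0 ≤ c1 * omegaHat ω ((1+r)/2) ^ α :=
        mul_nonneg hc1pos.le (Real.rpow_nonneg hωm _)
      linarith [hb2]
    calc omegaHat μ r ≤ c2 * omegaHat ω r ^ α := hb1
      _ ≤ c2 * (C ^ α * omegaHat ω ((1 + r)/2) ^ α) :=
          mul_le_mul_of_nonneg_left h3 hc2pos.le
      _ ≤ c2 * (C ^ α * (omegaHat μ ((1 + r)/2) / c1)) := by
          apply mul_le_mul_of_nonneg_left _ hc2pos.le
          exact mul_le_mul_of_nonneg_left h4 (Real.rpow_nonneg hC0.le _)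
      _ = (c2 * C ^ α / c1) * omegaHat μ ((1 + r)/2) := by ring
      _ ≤ Cμ * omegaHat μ ((1 + r)/2) :=
          mul_le_mul_of_nonneg_right (le_max_left _ _) hμm0
  have hμDhat : InDhat μ := ⟨Cμ, lt_of_lt_of_le one_pos hCμ1, hDμ⟩
  refine ⟨hμrad, hμDhat, ?_⟩
  -- moment bounds
  set Aω : ℝ := Real.exp (4 * Real.log (2*C)^2) + 1 with hAωdef
  set Aμ : ℝ := Real.exp (4 * Real.log (2*Cμ)^2) + 1 with hAμdef
  have hAωpos : 0 < Aω := by positivity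
  have hAμpos : 0 < Aμ := by positivity
  have hAωrpos : 0 < Aω ^ α := Real.rpow_pos_of_pos hAωpos _
  set Cf : ℝ := max 1 (max (Aμ * c2 * (2:ℝ) ^ α) (2 * Aω ^ α / c1)) with hCfdef
  have hCf1 : 1 ≤ Cf := le_max_left _ _
  have hCfpos : 0 < Cf := lt_of_lt_of_le one_pos hCf1
  refine ⟨Cf, hCf1, fun x hx => ?_⟩
  have hx0 : 0 < x := lt_of_lt_of_le one_pos hx
  set t : ℝ := 1 - 1/(2*x) with htdef
  have hu0 : 0 < 1/(2*x) := by positivity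
  have hu2 : 1/(2*x) ≤ 1/2 := by
    rw [div_le_div_iff₀ (by positivity) (by norm_num)]
    linarith
  have htmem : t ∈ Set.Ico (0:ℝ) 1 := ⟨by rw [htdef]; linarith, by rw [htdef]; linarith⟩
  have hmomω := wt_moment_bounds hnn hint hC1 hD' hx
  have hmomμ := wt_moment_bounds hμnn hμint hCμ1 hDμ hx
  rw [← htdef] at hmomω hmomμ
  rw [← hAωdef] at hmomω
  rw [← hAμdef] at hmomμ
  have hωt : 0 < omegaHat ω t := hpos t htmem
  have hωx0 : 0 ≤ momentW ω x := le_trans (by linarith [hωt]) hmomω.1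
  have hμb := hμbnd t htmem
  constructor
  · -- lower bound
    have h1 : momentW ω x / Aω ≤ omegaHat ω t := by
      rw [div_le_iff₀ hAωpos]
      linarith [hmomω.2]
    have h2 : momentW ω x ^ α / Aω ^ α ≤ omegaHat ω t ^ α := by
      rw [← Real.div_rpow hωx0 hAωpos.le]
      exact Real.rpow_le_rpow (by positivity) h1 hα.le
    have h3 : c1 * (momentW ω x ^ α / Aω ^ α) ≤ omegaHat μ t :=
      le_trans (mul_le_mul_of_nonneg_left h2 hc1pos.le) hμb.1
    have h4 : omegaHat μ t / 2 ≤ momentW μ x := hmomμ.1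
    have h5 : c1 / (2 * Aω ^ α) * momentW ω x ^ α ≤ momentW μ x := by
      have heq5 : c1 / (2 * Aω ^ α) * momentW ω x ^ α
          = (c1 * (momentW ω x ^ α / Aω ^ α)) / 2 := by
        ring
      rw [heq5]
      linarith
    have hCfge : 2 * Aω ^ α / c1 ≤ Cf := le_trans (le_max_right _ _) (le_max_right _ _)
    have h6 : Cf⁻¹ ≤ c1 / (2 * Aω ^ α) := by
      have heq6 : c1 / (2 * Aω ^ α) = (2 * Aω ^ α / c1)⁻¹ := by
        rw [inv_div]
      rw [heq6]
      exact inv_anti₀ (by positivity) hCfge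
    calc Cf⁻¹ * momentW ω x ^ α ≤ c1 / (2 * Aω ^ α) * momentW ω x ^ α :=
          mul_le_mul_of_nonneg_right h6 (Real.rpow_nonneg hωx0 _)
      _ ≤ momentW μ x := h5
  · -- upper bound
    have h1 : omegaHat ω t ≤ 2 * momentW ω x := by linarith [hmomω.1]
    have h2 : omegaHat ω t ^ α ≤ (2:ℝ) ^ α * momentW ω x ^ α := by
      rw [← Real.mul_rpow (by norm_num) hωx0]
      exact Real.rpow_le_rpow hωt.le h1 hα.le
    have hCfge : Aμ * c2 * (2:ℝ) ^ α ≤ Cf := le_trans (le_max_left _ _) (le_max_right _ _)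
    calc momentW μ x ≤ Aμ * omegaHat μ t := hmomμ.2
      _ ≤ Aμ * (c2 * omegaHat ω t ^ α) := mul_le_mul_of_nonneg_left hμb.2 hAμpos.le
      _ ≤ Aμ * (c2 * ((2:ℝ) ^ α * momentW ω x ^ α)) := by
          apply mul_le_mul_of_nonneg_left _ hAμpos.le
          exact mul_le_mul_of_nonneg_left h2 hc2pos.le
      _ = (Aμ * c2 * (2:ℝ) ^ α) * momentW ω x ^ α := by ring
      _ ≤ Cf * momentW ω x ^ α :=
          mul_le_mul_of_nonneg_right hCfge (Real.rpow_nonneg hωx0 _)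
end
end

section
/- Let ω be a radial weight in the class D̂. Then there exists K=K(ω)>1 such that the sequence {M_n}_{n≥0} defined by M_n = ⌊1/(1−r_n)⌋, where r_n = inf{r∈[0,1): ω̂(r) = ω̂(0)·K^{−n}}, is a lacunary sequence of natural numbers (in fact M_{n+1} ≥ (3/2)·M_n for all n≥0). -/
open MeasureTheory Filter Set
open scoped ENNReal

noncomputable section

lemma hIcc {ω : ℝ → ℝ} (hω : IsRadialWeight ω) : IntegrableOn ω (Icc 0 1) :=
  (integrableOn_Icc_iff_integrableOn_Ico).mpr hω.2

lemma omegaHat_cont {ω : ℝ → ℝ} (hω : IsRadialWeight ω) :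
    ContinuousOn (omegaHat ω) (Icc 0 1) := by
  have := intervalIntegral.continuousOn_primitive_interval_left (f := ω) (μ := volume)
    (a := 0) (b := 1) (by rw [uIcc_of_le (by norm_num : (0:ℝ) ≤ 1)]; exact hIcc hω)
  rwa [uIcc_of_le (by norm_num : (0:ℝ) ≤ 1)] at this

lemma omegaHat_anti {ω : ℝ → ℝ} (hω : IsRadialWeight ω) {x y : ℝ} (hx : 0 ≤ x) (hxy : x ≤ y)
    (hy : y ≤ 1) : omegaHat ω y ≤ omegaHat ω x := by
  have hxy' : IntervalIntegrable ω volume x y := by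
    rw [intervalIntegrable_iff_integrableOn_Ioc_of_le hxy]
    exact (hIcc hω).mono_set (fun s hs => ⟨hx.trans hs.1.le, hs.2.trans hy⟩)
  have hy1 : IntervalIntegrable ω volume y 1 := by
    rw [intervalIntegrable_iff_integrableOn_Ioc_of_le hy]
    exact (hIcc hω).mono_set (fun s hs => ⟨(hx.trans hxy).trans hs.1.le, hs.2⟩)
  have hsplit : (∫ s in x..y, ω s) + (∫ s in y..1, ω s) = ∫ s in x..1, ω s :=
    intervalIntegral.integral_add_adjacent_intervals hxy' hy1
  have hnn : 0 ≤ ∫ s in x..y, ω s := by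
    apply intervalIntegral.integral_nonneg_of_ae_restrict hxy
    rw [Filter.EventuallyLE, ae_restrict_iff' measurableSet_Icc]
    filter_upwards [(Set.countable_singleton (1:ℝ)).ae_notMem volume] with s hs1 hs
    exact hω.1 s ⟨hx.trans hs.1, lt_of_le_of_ne (hs.2.trans hy) (by simpa using hs1)⟩
  simp only [omegaHat]
  linarith

lemma omegaHat_one {ω : ℝ → ℝ} : omegaHat ω 1 = 0 := by simp [omegaHat]

/-- For `ω ∈ D̂` there is `K>1` such that `M_n = ⌊1/(1-r_n)⌋`, with
`r_n = inf{r ∈ [0,1) : ω̂(r) = ω̂(0)K^{-n}}`, is lacunary; in fact `M_{n+1} ≥ (3/2)M_n`. -/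
theorem MSeq_lacunary
    (ω : ℝ → ℝ) (hω : IsRadialWeight ω)
    (hpos : ∀ r ∈ Set.Ico (0:ℝ) 1, 0 < omegaHat ω r)
    (hD : InDhat ω) :
    ∃ K : ℝ, 1 < K ∧ (∀ n : ℕ, MSeq ω K n < MSeq ω K (n + 1)) ∧
      ∀ n : ℕ, (3 / 2 : ℝ) * (MSeq ω K n : ℝ) ≤ (MSeq ω K (n + 1) : ℝ) := by
  obtain ⟨C, hC0, hC⟩ := hD
  set C' : ℝ := max C 1 with hC'def
  have hC'1 : (1:ℝ) ≤ C' := le_max_right _ _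
  set K : ℝ := 2 * C' ^ 2 with hKdef
  have hK1 : (1:ℝ) < K := by nlinarith
  have hK0 : (0:ℝ) < K := by linarith
  have h00 : (0:ℝ) ∈ Ico (0:ℝ) 1 := ⟨le_refl _, by norm_num⟩
  have hω0 : 0 < omegaHat ω 0 := hpos 0 h00
  -- the doubling inequality with constant C'
  have hC' : ∀ r ∈ Set.Ico (0:ℝ) 1, omegaHat ω r ≤ C' * omegaHat ω ((1 + r) / 2) := by
    intro r hr
    refine (hC r hr).trans ?_
    have hmid : (1 + r) / 2 ∈ Ico (0:ℝ) 1 := ⟨by linarith [hr.1], by linarith [hr.2]⟩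
    exact mul_le_mul_of_nonneg_right (le_max_left _ _) (hpos _ hmid).le
  -- `r_n` is attained
  have key : ∀ n : ℕ, rSeq ω K n ∈ Ico (0:ℝ) 1 ∧
      omegaHat ω (rSeq ω K n) = omegaHat ω 0 * K ^ (-(n:ℝ)) := by
    intro n
    set v : ℝ := omegaHat ω 0 * K ^ (-(n:ℝ)) with hv
    have hv0 : 0 < v := mul_pos hω0 (Real.rpow_pos_of_pos hK0 _)
    have hvle : v ≤ omegaHat ω 0 := by
      have h1 : K ^ (-(n:ℝ)) ≤ 1 :=
        Real.rpow_le_one_of_one_le_of_nonpos hK1.le (neg_nonpos.mpr (Nat.cast_nonneg n))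
      exact mul_le_of_le_one_right hω0.le h1
    set S : Set ℝ := {r | r ∈ Set.Ico (0:ℝ) 1 ∧ omegaHat ω r = v} with hS
    have hSeq : S = Icc (0:ℝ) 1 ∩ omegaHat ω ⁻¹' {v} := by
      ext r
      constructor
      · rintro ⟨⟨h1, h2⟩, h3⟩; exact ⟨⟨h1, h2.le⟩, h3⟩
      · rintro ⟨⟨h1, h2⟩, h3⟩
        refine ⟨⟨h1, lt_of_le_of_ne h2 ?_⟩, h3⟩
        rintro rfl
        rw [Set.mem_preimage, Set.mem_singleton_iff, omegaHat_one] at h3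
        linarith
    have hSne : S.Nonempty := by
      have hsub := intermediate_value_Icc' (by norm_num : (0:ℝ) ≤ 1) (omegaHat_cont hω)
      have : v ∈ Icc (omegaHat ω 1) (omegaHat ω 0) := by
        rw [omegaHat_one]; exact ⟨hv0.le, hvle⟩
      obtain ⟨r, hr, hrv⟩ := hsub this
      rw [hSeq]; exact ⟨r, hr, hrv⟩
    have hScl : IsClosed S := by
      rw [hSeq]
      exact (omegaHat_cont hω).preimage_isClosed_of_isClosed isClosed_Icc isClosed_singleton
    have hSbdd : BddBelow S := ⟨0, fun r hr => hr.1.1⟩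
    have := hScl.csInf_mem hSne hSbdd
    exact this
  -- the step: 1 - r_{n+1} < (1 - r_n)/4
  have step : ∀ n : ℕ, 1 - rSeq ω K (n + 1) < (1 - rSeq ω K n) / 4 := by
    intro n
    obtain ⟨hr, hrv⟩ := key n
    obtain ⟨hr', hrv'⟩ := key (n + 1)
    set r := rSeq ω K n
    set r' := rSeq ω K (n + 1)
    set m : ℝ := (1 + r) / 2 with hm
    have hmI : m ∈ Ico (0:ℝ) 1 := ⟨by linarith [hr.1], by linarith [hr.2]⟩
    set s : ℝ := (1 + m) / 2 with hs
    have hsI : s ∈ Ico (0:ℝ) 1 := ⟨by linarith [hmI.1], by linarith [hmI.2]⟩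
    have h1 : omegaHat ω r ≤ C' * omegaHat ω m := hC' r hr
    have h2 : omegaHat ω m ≤ C' * omegaHat ω s := hC' m hmI
    have hC'0 : (0:ℝ) < C' := by linarith
    have h3 : omegaHat ω r ≤ C' ^ 2 * omegaHat ω s := by nlinarith
    have hvrel : omegaHat ω r' = omegaHat ω r / K := by
      rw [hrv, hrv']
      have : (-(↑(n+1):ℝ)) = (-(n:ℝ)) + (-1) := by push_cast; ring
      rw [this, Real.rpow_add hK0, Real.rpow_neg_one]
      field_simp
    have hspos : 0 < omegaHat ω s := hpos s hsI
    have hlt : omegaHat ω r' < omegaHat ω s := by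
      rw [hvrel, hKdef]
      have hK0' : (0:ℝ) < 2 * C' ^ 2 := by positivity
      rw [div_lt_iff₀ hK0']
      nlinarith
    have hr's : s < r' := by
      by_contra h
      push_neg at h
      have := omegaHat_anti hω hr'.1 h hsI.2.le
      linarith
    have : s = 1 - (1 - r) / 4 := by rw [hs, hm]; ring
    linarith
  -- now the arithmetic
  have main : ∀ n : ℕ, (3 / 2 : ℝ) * (MSeq ω K n : ℝ) ≤ (MSeq ω K (n + 1) : ℝ) := by
    intro n
    obtain ⟨hr, _⟩ := key n
    obtain ⟨hr', _⟩ := key (n + 1)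
    set r := rSeq ω K n
    set r' := rSeq ω K (n + 1)
    have h1r : 0 < 1 - r := by linarith [hr.2]
    have h1r' : 0 < 1 - r' := by linarith [hr'.2]
    set a : ℝ := 1 / (1 - r) with ha
    set b : ℝ := 1 / (1 - r') with hb
    have ha1 : 1 ≤ a := by rw [ha, le_div_iff₀ h1r]; linarith [hr.1]
    have hab : 4 * a < b := by
      have h4 : 0 < (1 - r) / 4 := by linarith
      have := one_div_lt_one_div_of_lt h1r' (step n)
      rw [hb]
      calc 4 * a = 1 / ((1 - r) / 4) := by rw [ha]; field_simp
        _ < 1 / (1 - r') := this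
    have hfa : (MSeq ω K n : ℝ) ≤ a := Nat.floor_le (by linarith)
    have hfb : b - 1 < (MSeq ω K (n + 1) : ℝ) := Nat.sub_one_lt_floor b
    calc (3 / 2 : ℝ) * (MSeq ω K n : ℝ) ≤ (3 / 2) * a := by linarith
      _ ≤ b - 1 := by linarith
      _ ≤ (MSeq ω K (n + 1) : ℝ) := hfb.le
  refine ⟨K, hK1, ?_, main⟩
  intro n
  obtain ⟨hr, _⟩ := key n
  have h1r : 0 < 1 - rSeq ω K n := by linarith [hr.2]
  have hM1 : 1 ≤ MSeq ω K n := by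
    rw [MSeq]
    refine Nat.le_floor ?_
    rw [Nat.cast_one, le_div_iff₀ h1r]
    linarith [hr.1]
  have := main n
  have hM1' : (1:ℝ) ≤ (MSeq ω K n : ℝ) := by exact_mod_cast hM1
  rw [← Nat.cast_lt (α := ℝ)]
  linarith
end
end
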